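/- arXiv:2605.05551 — 3 statements merged into one kernel-verified Lean document; each statement's English description precedes it below -/
import Mathlib

section
/- If α > 0, a₁ > 0 and a₂ is a real number with 0 ≤ a₂ < a₁, then both roots of the quadratic equation (α + a₁)·λ² − a₂·λ − α = 0 have modulus strictly less than 1. -/
/-- If `α > 0`, `a₁ > 0` and `0 ≤ a₂ < a₁`, then both (complex) roots of
`(α + a₁)·λ² − a₂·λ − α = 0` have modulus strictly less than 1. -/
theorem stmt_1 (α a₁ a₂ : ℝ) (hα : 0 < α) (ha₁ : 0 < a₁) (ha₂ : 0 ≤ a₂) (h : a₂ < a₁) :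
    ∀ lam : ℂ, ((α : ℂ) + a₁) * lam ^ 2 - (a₂ : ℂ) * lam - (α : ℂ) = 0 →
      ‖lam‖ < 1 := by
  intro lam heq
  by_contra hc
  push_neg at hc
  set t := ‖lam‖ with ht
  have heq2 : ((α : ℂ) + a₁) * lam ^ 2 = (a₂ : ℂ) * lam + (α : ℂ) := by
    linear_combination heq
  have habs : (α + a₁) * t ^ 2 ≤ a₂ * t + α := by
    have h1 : ‖((α : ℂ) + a₁) * lam ^ 2‖ = (α + a₁) * t ^ 2 := by
      rw [norm_mul, norm_pow]
      congr 1
      rw [← Complex.ofReal_add, Complex.norm_real, Real.norm_eq_abs, abs_of_pos (by linarith)]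
    have h2 : ‖(a₂ : ℂ) * lam + (α : ℂ)‖ ≤ a₂ * t + α := by
      refine le_trans (norm_add_le _ _) ?_
      rw [norm_mul, Complex.norm_real, Complex.norm_real, Real.norm_eq_abs, Real.norm_eq_abs,
        abs_of_nonneg ha₂, abs_of_pos hα]
    calc (α + a₁) * t ^ 2 = ‖((α : ℂ) + a₁) * lam ^ 2‖ := h1.symm
      _ = ‖(a₂ : ℂ) * lam + (α : ℂ)‖ := by rw [heq2]
      _ ≤ a₂ * t + α := h2
  nlinarith [sq_nonneg t, sq_nonneg (t - 1)]
end

section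
/- Let A₁ ∈ ℝ^{p×n} have full column rank, A₂ ∈ ℝ^{q×n}, and suppose A₁ᵀA₁ − A₂ᵀA₂ is positive definite. For any α > 0, every eigenvalue of the 2n×2n block matrix W = [[P⁻¹R, P⁻¹S], [I, 0]], where P = αI + A₁ᵀA₁, R = A₂ᵀA₂, S = αI, has modulus strictly less than 1; i.e., the spectral radius of W is less than 1. -/
open Matrix


namespace DSaux

noncomputable def nsq {k : ℕ} (w : Fin k → ℂ) : ℝ := ∑ i, Complex.normSq (w i)

lemma nsq_nonneg {k : ℕ} (w : Fin k → ℂ) : 0 ≤ nsq w :=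
  Finset.sum_nonneg fun i _ => Complex.normSq_nonneg _

lemma nsq_pos {k : ℕ} {w : Fin k → ℂ} (hw : w ≠ 0) : 0 < nsq w := by
  obtain ⟨i, hi⟩ := Function.ne_iff.mp hw
  exact Finset.sum_pos' (fun j _ => Complex.normSq_nonneg _)
    ⟨i, Finset.mem_univ i, Complex.normSq_pos.mpr hi⟩

lemma star_dot_self {k : ℕ} (w : Fin k → ℂ) : star w ⬝ᵥ w = ((nsq w : ℝ) : ℂ) := by
  simp [dotProduct, nsq, Complex.normSq_eq_conj_mul_self]

lemma map_mulVec_star {k m : ℕ} (B : Matrix (Fin k) (Fin m) ℝ) (z : Fin m → ℂ) :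
    B.map Complex.ofReal *ᵥ star z = star (B.map Complex.ofReal *ᵥ z) := by
  funext i
  simp [mulVec, dotProduct, map_sum, mul_comm]

lemma dot_BtB {k m : ℕ} (B : Matrix (Fin k) (Fin m) ℝ) (z : Fin m → ℂ) :
    star z ⬝ᵥ ((Bᵀ * B).map Complex.ofReal *ᵥ z)
      = ((nsq (B.map Complex.ofReal *ᵥ z) : ℝ) : ℂ) := by
  have hmap : (Bᵀ * B).map Complex.ofReal
      = (B.map Complex.ofReal)ᵀ * (B.map Complex.ofReal) := by
    simp only [show Complex.ofReal = ⇑Complex.ofRealHom from rfl, Matrix.map_mul,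
      Matrix.transpose_map]
  rw [hmap, ← mulVec_mulVec, dotProduct_mulVec, ← transpose_transpose (B.map Complex.ofReal),
    vecMul_transpose, transpose_transpose, map_mulVec_star, star_dot_self]

lemma dot_BtB_real {k m : ℕ} (B : Matrix (Fin k) (Fin m) ℝ) (x : Fin m → ℝ) :
    x ⬝ᵥ ((Bᵀ * B) *ᵥ x) = (B *ᵥ x) ⬝ᵥ (B *ᵥ x) := by
  rw [← mulVec_mulVec, dotProduct_mulVec, ← transpose_transpose B, vecMul_transpose,
    transpose_transpose]

lemma nsq_decomp {k m : ℕ} (B : Matrix (Fin k) (Fin m) ℝ) (z : Fin m → ℂ) :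
    nsq (B.map Complex.ofReal *ᵥ z)
      = (B *ᵥ fun j => (z j).re) ⬝ᵥ (B *ᵥ fun j => (z j).re)
        + (B *ᵥ fun j => (z j).im) ⬝ᵥ (B *ᵥ fun j => (z j).im) := by
  unfold nsq
  rw [dotProduct, dotProduct, ← Finset.sum_add_distrib]
  refine Finset.sum_congr rfl fun i _ => ?_
  have hre : ((B.map Complex.ofReal *ᵥ z) i).re = (B *ᵥ fun j => (z j).re) i := by
    simp [mulVec, dotProduct, Complex.re_sum, Matrix.map_apply]
  have him : ((B.map Complex.ofReal *ᵥ z) i).im = (B *ᵥ fun j => (z j).im) i := by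
    simp [mulVec, dotProduct, Complex.im_sum, Matrix.map_apply]
  rw [Complex.normSq_apply, hre, him]

end DSaux


open DSaux

/-- Main convergence theorem for the DS iteration: if `A₁` has full column rank and
`A₁ᵀA₁ − A₂ᵀA₂` is positive definite, then for any `α > 0` every (complex) eigenvalue
of `W = [[P⁻¹R, P⁻¹S], [I, 0]]`, with `P = αI + A₁ᵀA₁`, `R = A₂ᵀA₂`, `S = αI`, has
modulus strictly less than 1. -/
theorem stmt_8 (p q n : ℕ) (A₁ : Matrix (Fin p) (Fin n) ℝ) (A₂ : Matrix (Fin q) (Fin n) ℝ)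
    (hrank : A₁.rank = n)
    (hpd : (A₁ᵀ * A₁ - A₂ᵀ * A₂).PosDef)
    (α : ℝ) (hα : 0 < α)
    (P R S : Matrix (Fin n) (Fin n) ℝ)
    (hPdef : P = α • (1 : Matrix (Fin n) (Fin n) ℝ) + A₁ᵀ * A₁)
    (hRdef : R = A₂ᵀ * A₂)
    (hSdef : S = α • (1 : Matrix (Fin n) (Fin n) ℝ)) :
    ∀ lam : ℂ,
      (∃ v : Fin n ⊕ Fin n → ℂ, v ≠ 0 ∧
        (Matrix.fromBlocks
            ((P.map Complex.ofReal)⁻¹ * R.map Complex.ofReal)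
            ((P.map Complex.ofReal)⁻¹ * S.map Complex.ofReal)
            (1 : Matrix (Fin n) (Fin n) ℂ) 0) *ᵥ v = lam • v) →
      ‖lam‖ < 1 := by
  rintro lam ⟨v, hv, heq⟩
  set x : Fin n → ℂ := fun i => v (Sum.inl i) with hx
  set y : Fin n → ℂ := fun i => v (Sum.inr i) with hy
  have hv' : v = Sum.elim x y := funext fun s => by cases s <;> rfl
  rw [hv', fromBlocks_mulVec] at heq
  -- component equations
  have hbot : x = lam • y := by
    funext i
    simpa using congrFun heq (Sum.inr i)
  have htop : ((P.map Complex.ofReal)⁻¹ * R.map Complex.ofReal) *ᵥ x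
      + ((P.map Complex.ofReal)⁻¹ * S.map Complex.ofReal) *ᵥ y = lam • x := by
    funext i
    simpa using congrFun heq (Sum.inl i)
  -- y ≠ 0
  have hy0 : y ≠ 0 := by
    intro h0
    apply hv
    rw [hv']
    funext s
    cases s <;> simp [hbot, h0]
  -- maps of P and S
  have hSmap : S.map Complex.ofReal = (α : ℂ) • (1 : Matrix (Fin n) (Fin n) ℂ) := by
    subst hSdef
    ext i j
    simp [Matrix.map_apply, Matrix.one_apply, apply_ite Complex.ofReal]
  have hPmap : P.map Complex.ofReal
      = (α : ℂ) • (1 : Matrix (Fin n) (Fin n) ℂ) + (A₁ᵀ * A₁).map Complex.ofReal := by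
    subst hPdef
    ext i j
    simp [Matrix.map_apply, Matrix.one_apply, apply_ite Complex.ofReal]
  -- dot products with P
  have dotP : ∀ z : Fin n → ℂ, star z ⬝ᵥ (P.map Complex.ofReal *ᵥ z)
      = ((α * nsq z + nsq (A₁.map Complex.ofReal *ᵥ z) : ℝ) : ℂ) := by
    intro z
    rw [hPmap, add_mulVec, dotProduct_add, smul_mulVec, one_mulVec, dotProduct_smul,
      star_dot_self, dot_BtB]
    push_cast [smul_eq_mul]
    ring
  -- invertibility of P.map
  have hdet : IsUnit (P.map Complex.ofReal).det := by
    rw [isUnit_iff_ne_zero]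
    intro hdet0
    obtain ⟨z, hz0, hz⟩ := (Matrix.exists_mulVec_eq_zero_iff).mpr hdet0
    have := dotP z
    rw [hz, dotProduct_zero] at this
    have h0 : α * nsq z + nsq (A₁.map Complex.ofReal *ᵥ z) = 0 := by
      exact_mod_cast this.symm
    have := mul_pos hα (nsq_pos hz0)
    have := nsq_nonneg (A₁.map Complex.ofReal *ᵥ z)
    linarith
  have hPP : P.map Complex.ofReal * (P.map Complex.ofReal)⁻¹ = 1 :=
    Matrix.mul_nonsing_inv _ hdet
  -- multiply top equation by P
  have h2 : R.map Complex.ofReal *ᵥ x + S.map Complex.ofReal *ᵥ y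
      = lam • (P.map Complex.ofReal *ᵥ x) := by
    have h := congrArg (fun w => P.map Complex.ofReal *ᵥ w) htop
    simp only [mulVec_add, mulVec_mulVec, mulVec_smul] at h
    rwa [← mul_assoc, ← mul_assoc, hPP, one_mul, one_mul] at h
  -- substitute x = lam • y
  have h3 : lam • (R.map Complex.ofReal *ᵥ y) + (α : ℂ) • y
      = (lam * lam) • (P.map Complex.ofReal *ᵥ y) := by
    rw [hbot, hSmap] at h2
    simpa [mulVec_smul, smul_mulVec, one_mulVec, smul_smul] using h2
  -- dot with star y
  set m := nsq y with hm'
  set aq := nsq (A₁.map Complex.ofReal *ᵥ y) with haq'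
  set rq := nsq (A₂.map Complex.ofReal *ᵥ y) with hrq'
  have hkey : lam * rq + (α : ℂ) * m = (lam * lam) * ((α * m + aq : ℝ) : ℂ) := by
    have h := congrArg (fun w => star y ⬝ᵥ w) h3
    simp only [dotProduct_add, dotProduct_smul, smul_eq_mul] at h
    rw [hRdef, dot_BtB, star_dot_self, dotP] at h
    exact h
  -- positivity
  have hm : 0 < m := nsq_pos hy0
  have hrq : 0 ≤ rq := nsq_nonneg _
  have haq : 0 ≤ aq := nsq_nonneg _
  -- aq - rq > 0 via real/imaginary decomposition
  have har : rq < aq := by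
    set u : Fin n → ℝ := fun j => (y j).re with hu'
    set w : Fin n → ℝ := fun j => (y j).im with hw'
    have hdec : aq - rq = u ⬝ᵥ ((A₁ᵀ * A₁ - A₂ᵀ * A₂) *ᵥ u)
        + w ⬝ᵥ ((A₁ᵀ * A₁ - A₂ᵀ * A₂) *ᵥ w) := by
      rw [haq', hrq', nsq_decomp, nsq_decomp]
      simp only [sub_mulVec, dotProduct_sub, dot_BtB_real]
      ring
    have huw : u ≠ 0 ∨ w ≠ 0 := by
      by_contra h
      push_neg at h
      apply hy0
      funext j
      have h1 := congrFun h.1 j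
      have h2 := congrFun h.2 j
      exact Complex.ext (by simpa using h1) (by simpa using h2)
    have hgnn : ∀ z : Fin n → ℝ, 0 ≤ z ⬝ᵥ ((A₁ᵀ * A₁ - A₂ᵀ * A₂) *ᵥ z) := by
      intro z
      have := hpd.posSemidef.dotProduct_mulVec_nonneg z
      simpa using this
    have hgpos : ∀ z : Fin n → ℝ, z ≠ 0 → 0 < z ⬝ᵥ ((A₁ᵀ * A₁ - A₂ᵀ * A₂) *ᵥ z) := by
      intro z hz
      have := hpd.dotProduct_mulVec_pos hz
      simpa using this
    rcases huw with h | h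
    · have := hgpos u h
      have := hgnn w
      linarith
    · have := hgpos w h
      have := hgnn u
      linarith
  -- final modulus argument
  set L := ‖lam‖ with hL'
  have hL0 : 0 ≤ L := norm_nonneg lam
  have hineq : L * L * (α * m + aq) ≤ L * rq + α * m := by
    have habs := congrArg norm hkey
    rw [norm_mul, norm_mul, Complex.norm_real, Real.norm_eq_abs,
      abs_of_nonneg (by nlinarith : (0:ℝ) ≤ α * m + aq)] at habs
    calc L * L * (α * m + aq) = ‖lam * ↑rq + (α : ℂ) * ↑m‖ := habs.symm
      _ ≤ ‖lam * ↑rq‖ + ‖(α : ℂ) * ↑m‖ := norm_add_le _ _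
      _ = L * rq + α * m := by
          rw [norm_mul, norm_mul, Complex.norm_real, Complex.norm_real,
            Complex.norm_real, Real.norm_eq_abs, Real.norm_eq_abs, Real.norm_eq_abs, abs_of_nonneg hrq, abs_of_nonneg hα.le, abs_of_nonneg hm.le]
  by_contra hL
  push_neg at hL
  nlinarith [mul_pos hα hm, mul_nonneg (mul_nonneg hL0 hL0) haq,
    mul_nonneg (sub_nonneg.mpr hL) hrq, mul_nonneg (sub_nonneg.mpr hL) (mul_pos hα hm).le,
    mul_nonneg (mul_nonneg (sub_nonneg.mpr hL) hL0) (sub_nonneg.mpr har.le)]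
end

section
/- Let α > 0 and a₁ > a₂ ≥ 0. Every complex root λ of (α + a₁)λ² − a₂λ − α = 0 satisfies |λ| ≤ max of the two real roots' absolute values, and in fact both roots are real with absolute value less than 1. -/
/-- For `α > 0` and `a₁ > a₂ ≥ 0`, every complex root of
`(α + a₁)λ² − a₂λ − α = 0` is real and has absolute value less than 1. -/
theorem stmt_18 (α a₁ a₂ : ℝ) (hα : 0 < α) (ha₂ : 0 ≤ a₂) (h : a₂ < a₁) :
    ∀ lam : ℂ, ((α : ℂ) + a₁) * lam ^ 2 - (a₂ : ℂ) * lam - (α : ℂ) = 0 →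
      lam.im = 0 ∧ ‖lam‖ < 1 := by
  intro lam heq
  set x := lam.re with hx
  set y := lam.im with hy
  have hre : (α + a₁) * (x ^ 2 - y ^ 2) - a₂ * x - α = 0 := by
    have := congrArg Complex.re heq
    simp [Complex.add_re, Complex.mul_re, Complex.mul_im, pow_two, ← hx, ← hy] at this
    ring_nf at this ⊢
    linarith [this]
  have him : (α + a₁) * (2 * x * y) - a₂ * y = 0 := by
    have := congrArg Complex.im heq
    simp [Complex.add_re, Complex.mul_re, Complex.mul_im, pow_two, ← hx, ← hy] at this
    ring_nf at this ⊢
    linarith [this]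
  have hy0 : y = 0 := by
    by_contra hy0
    have h1 : (α + a₁) * (2 * x) - a₂ = 0 := by
      have : ((α + a₁) * (2 * x) - a₂) * y = 0 := by ring_nf; ring_nf at him; linarith
      rcases mul_eq_zero.1 this with h' | h'
      · exact h'
      · exact absurd h' hy0
    have hy2 : 0 < y ^ 2 := by positivity
    have hs : a₂ * x = 2 * (α + a₁) * x ^ 2 := by nlinarith [h1]
    have hpos : 0 < α + a₁ := by linarith
    nlinarith [mul_pos hpos hy2, mul_nonneg hpos.le (sq_nonneg x)]
  refine ⟨hy0, ?_⟩
  have hlam : lam = (x : ℂ) := Complex.ext rfl hy0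
  rw [hlam, Complex.norm_real, Real.norm_eq_abs, abs_lt]
  have hre' : (α + a₁) * x ^ 2 - a₂ * x - α = 0 := by
    rw [hy0] at hre; linarith [hre]
  constructor
  · nlinarith [sq_nonneg (x + 1), sq_nonneg x]
  · nlinarith [sq_nonneg (x - 1), sq_nonneg x]
end
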